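/- If T is semistandard and T⁺ is shifted Yamanouchi, then T is Yamanouchi, i.e. the reading word w(T) is a lattice word. -/
import Mathlib


noncomputable section

/-- A partition, written 1-based: `α i` is the length of row `i` for `i ≥ 1`
(we normalize `α 0 = 0`); it is weakly decreasing and eventually zero. -/
def IsPartition (α : ℕ → ℕ) : Prop :=
  α 0 = 0 ∧ (∀ i j, 1 ≤ i → i ≤ j → α j ≤ α i) ∧ ∃ N, ∀ i, N ≤ i → α i = 0

/-- The set of cells of the skew diagram `α/β` (rows and columns 1-based):
`(i,j)` with `β i < j ≤ α i`. -/
def cellOf (α β : ℕ → ℕ) : Set (ℕ × ℕ) := {p | β p.1 < p.2 ∧ p.2 ≤ α p.1}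

/-- The conjugate partition (1-based): `(conjP α) j = #{i ≥ 1 | α i ≥ j}` for `j ≥ 1`. -/
def conjP (α : ℕ → ℕ) (j : ℕ) : ℕ := Set.ncard {i : ℕ | 1 ≤ i ∧ 1 ≤ j ∧ j ≤ α i}

/-- Semistandard skew tableau: entries weakly increase along rows (left to right) and
strictly increase down columns. -/
def IsSSkew (α β : ℕ → ℕ) (T : ℕ × ℕ → ℕ) : Prop :=
  (∀ i j j', (i, j) ∈ cellOf α β → (i, j') ∈ cellOf α β → j ≤ j' → T (i, j) ≤ T (i, j')) ∧
  (∀ i i' j, (i, j) ∈ cellOf α β → (i', j) ∈ cellOf α β → i < i' → T (i, j) < T (i', j))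

/-- Anti-semistandard skew tableau: entries strictly decrease along rows (left to right)
and weakly decrease down columns. -/
def IsAntiSSkew (α β : ℕ → ℕ) (T : ℕ × ℕ → ℕ) : Prop :=
  (∀ i j j', (i, j) ∈ cellOf α β → (i, j') ∈ cellOf α β → j < j' → T (i, j') < T (i, j)) ∧
  (∀ i i' j, (i, j) ∈ cellOf α β → (i', j) ∈ cellOf α β → i ≤ i' → T (i', j) ≤ T (i, j))

/-- `wle p q` : cell `p` comes weakly before cell `q` in the reading order of the reading
word (rows top to bottom, inside each row right to left). -/
def wle (p q : ℕ × ℕ) : Prop := p.1 < q.1 ∨ (p.1 = q.1 ∧ q.2 ≤ p.2)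

/-- Number of occurrences of the symbol `v` among the cells weakly before `x` in the
reading word of `T` (so "the `j`-th occurrence of `v` in `w(T)` is at the cell `x`" reads
`x ∈ cellOf α β ∧ T x = v ∧ occBefore α β T v x = j`). -/
def occBefore (α β : ℕ → ℕ) (T : ℕ × ℕ → ℕ) (v : ℕ) (x : ℕ × ℕ) : ℕ :=
  Set.ncard {p | p ∈ cellOf α β ∧ wle p x ∧ T p = v}

/-- Total number of occurrences of the symbol `v` in the skew tableau `T`. -/
def occCount (α β : ℕ → ℕ) (T : ℕ × ℕ → ℕ) (v : ℕ) : ℕ :=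
  Set.ncard {p | p ∈ cellOf α β ∧ T p = v}

/-- The reading word of `T` is a lattice word for the symbols `base, base+1, …` :
in every initial segment, `v+1` occurs at most as often as `v`, for every `v ≥ base`. -/
def IsLatticeFrom (α β : ℕ → ℕ) (T : ℕ × ℕ → ℕ) (base : ℕ) : Prop :=
  ∀ x ∈ cellOf α β, ∀ v, base ≤ v → occBefore α β T (v + 1) x ≤ occBefore α β T v x

/-- `T` (with symbols `m+1, m+2, …`) is shifted Yamanouchi with respect to the shift `ω`:
for every initial segment `w′` of the reading word and every `i ≥ 1`,
`ω i + a_i(w′) ≥ ω (i+1) + a_{i+1}(w′)`. -/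
def ShiftedYam (α β : ℕ → ℕ) (m : ℕ) (ω : ℕ → ℕ) (T : ℕ × ℕ → ℕ) : Prop :=
  ∀ x ∈ cellOf α β, ∀ i, 1 ≤ i →
    ω (i + 1) + occBefore α β T (m + i + 1) x ≤ ω i + occBefore α β T (m + i) x

/-- `Tm = Rp(Tp)` : if the `j`-th occurrence of the symbol `m+i` in the reading word of
`Tp` lies in column `c` of `Tp`, then the entry of `Tm` at the cell `(i, ω i + j)` is `c`. -/
def IsRp (α β : ℕ → ℕ) (m : ℕ) (ω : ℕ → ℕ) (Tp Tm : ℕ × ℕ → ℕ) : Prop :=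
  ∀ x ∈ cellOf α β, ∀ i, 1 ≤ i → Tp x = m + i →
    Tm (i, ω i + occBefore α β Tp (m + i) x) = x.2

/-- `λ⁺` : the first `m` rows of `λ`. -/
def lamPlus (m : ℕ) (la : ℕ → ℕ) : ℕ → ℕ := fun i => if i ≤ m then la i else 0

/-- `λ⁻` : the conjugate of the partition `(λ_{m+1}, λ_{m+2}, …)`. -/
def lamMinus (m : ℕ) (la : ℕ → ℕ) : ℕ → ℕ :=
  conjP (fun i => if 1 ≤ i then la (m + i) else 0)

lemma ncard_Icc' (a b : ℕ) : (Set.Icc a b).ncard = b + 1 - a := by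
  rw [← Finset.coe_Icc, Set.ncard_coe_finset, Nat.card_Icc]

lemma downward_eq_Icc {S : Set ℕ} (hfin : S.Finite)
    (h1 : ∀ i ∈ S, 1 ≤ i)
    (hdc : ∀ i ∈ S, ∀ k, 1 ≤ k → k ≤ i → k ∈ S) : S = Set.Icc 1 S.ncard := by
  ext i
  simp only [Set.mem_Icc]
  constructor
  · intro hi
    refine ⟨h1 i hi, ?_⟩
    have hsub : Set.Icc 1 i ⊆ S := fun k hk => hdc i hi k hk.1 hk.2
    have := Set.ncard_le_ncard hsub hfin
    rw [ncard_Icc'] at this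
    omega
  · rintro ⟨h1i, hle⟩
    by_contra hi
    have hsub : S ⊆ Set.Icc 1 (i - 1) := by
      intro j hj
      refine ⟨h1 j hj, ?_⟩
      by_contra hji
      exact hi (hdc j hj i h1i (by omega))
    have := Set.ncard_le_ncard hsub (Set.finite_Icc _ _)
    rw [ncard_Icc'] at this
    omega

lemma conj_set_eq (la : ℕ → ℕ) (hla : IsPartition la) (r : ℕ) :
    {i : ℕ | 1 ≤ i ∧ 1 ≤ r ∧ r ≤ la i} = Set.Icc 1 (conjP la r) := by
  have hfin : {i : ℕ | 1 ≤ i ∧ 1 ≤ r ∧ r ≤ la i}.Finite := by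
    obtain ⟨N, hN⟩ := hla.2.2
    apply (Set.finite_Icc 1 N).subset
    rintro i ⟨h1, hr, hle⟩
    refine ⟨h1, ?_⟩
    by_contra h
    have := hN i (by omega)
    omega
  exact downward_eq_Icc hfin (fun i hi => hi.1)
    (fun i hi k hk1 hki => ⟨hk1, hi.2.1, le_trans hi.2.2 (hla.2.1 k i hk1 hki)⟩)

lemma conjP_zero (α : ℕ → ℕ) : conjP α 0 = 0 := by
  have h : {i : ℕ | 1 ≤ i ∧ 1 ≤ 0 ∧ 0 ≤ α i} = ∅ := by ext i; simp
  unfold conjP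
  rw [h, Set.ncard_empty]

lemma conj_anti (la : ℕ → ℕ) (hla : IsPartition la) {r r' : ℕ} (hr : 1 ≤ r) (hrr : r ≤ r') :
    conjP la r' ≤ conjP la r := by
  by_cases h : conjP la r' = 0
  · omega
  · have h1 : conjP la r' ∈ Set.Icc 1 (conjP la r') := ⟨by omega, le_rfl⟩
    rw [← conj_set_eq la hla r'] at h1
    obtain ⟨hi1, hir, hile⟩ := h1
    have h2 : conjP la r' ∈ {i : ℕ | 1 ≤ i ∧ 1 ≤ r ∧ r ≤ la i} := ⟨hi1, hr, by omega⟩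
    rw [conj_set_eq la hla r] at h2
    exact h2.2

lemma conj_lamPlus (m : ℕ) (la : ℕ → ℕ) (hla : IsPartition la) (r : ℕ) (hr : 1 ≤ r) :
    conjP (lamPlus m la) r = min m (conjP la r) := by
  have hset : {i : ℕ | 1 ≤ i ∧ 1 ≤ r ∧ r ≤ lamPlus m la i} = Set.Icc 1 (min m (conjP la r)) := by
    ext i
    simp only [lamPlus, Set.mem_Icc, Set.mem_setOf_eq]
    constructor
    · rintro ⟨h1, hr1, hle⟩
      by_cases him : i ≤ m
      · rw [if_pos him] at hle
        have h2 : i ∈ {i : ℕ | 1 ≤ i ∧ 1 ≤ r ∧ r ≤ la i} := ⟨h1, hr1, hle⟩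
        rw [conj_set_eq la hla r] at h2
        have := h2.2
        omega
      · rw [if_neg him] at hle
        omega
    · rintro ⟨h1, hle⟩
      have h2 : i ∈ Set.Icc 1 (conjP la r) := ⟨h1, by omega⟩
      rw [← conj_set_eq la hla r] at h2
      refine ⟨h1, hr, ?_⟩
      rw [if_pos (by omega : i ≤ m)]
      exact h2.2.2
  show Set.ncard {i : ℕ | 1 ≤ i ∧ 1 ≤ r ∧ r ≤ lamPlus m la i} = min m (conjP la r)
  rw [hset, ncard_Icc']
  omega

lemma lamMinus_eq (m : ℕ) (la : ℕ → ℕ) (hla : IsPartition la) (r : ℕ) (hr : 1 ≤ r) :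
    lamMinus m la r = conjP la r - m := by
  have hset : {k : ℕ | 1 ≤ k ∧ 1 ≤ r ∧ r ≤ (if 1 ≤ k then la (m + k) else 0)}
      = Set.Icc 1 (conjP la r - m) := by
    ext k
    simp only [Set.mem_setOf_eq, Set.mem_Icc]
    constructor
    · rintro ⟨h1, hr1, hle⟩
      rw [if_pos h1] at hle
      have h2 : m + k ∈ {i : ℕ | 1 ≤ i ∧ 1 ≤ r ∧ r ≤ la i} := ⟨by omega, hr1, hle⟩
      rw [conj_set_eq la hla r] at h2
      have := h2.2
      omega
    · rintro ⟨h1, hle⟩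
      have hmk : m + k ∈ Set.Icc 1 (conjP la r) := ⟨by omega, by omega⟩
      rw [← conj_set_eq la hla r] at hmk
      refine ⟨h1, hr, ?_⟩
      rw [if_pos h1]
      exact hmk.2.2
  show Set.ncard {k : ℕ | 1 ≤ k ∧ 1 ≤ r ∧ r ≤ (if 1 ≤ k then la (m + k) else 0)} = conjP la r - m
  rw [hset, ncard_Icc']
  omega

lemma canon_card (m : ℕ) (la μ : ℕ → ℕ) (T : ℕ × ℕ → ℕ)
    (hβm : ∀ r, 1 ≤ r → conjP μ r ≤ m)
    (hcanon : ∀ p ∈ cellOf (conjP la) (conjP μ), m < p.2 → T p = m + p.1)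
    (x : ℕ × ℕ) (i a v : ℕ) (hi : 1 ≤ i) (hv : v = m + i)
    (ha : ∀ j, (m < j ∧ wle (i, j) x) ↔ a ≤ j) :
    {p | p ∈ cellOf (conjP la) (conjP μ) ∧ wle p x ∧ T p = v ∧ m < p.2}.ncard
      = conjP la i + 1 - a := by
  subst hv
  have hset : {p | p ∈ cellOf (conjP la) (conjP μ) ∧ wle p x ∧ T p = m + i ∧ m < p.2}
      = (fun j => ((i : ℕ), j)) '' Set.Icc a (conjP la i) := by
    ext p
    simp only [Set.mem_setOf_eq, Set.mem_image, Set.mem_Icc]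
    constructor
    · rintro ⟨hcp, hwp, htp, hm2⟩
      have hp1 : p.1 = i := by have := hcanon p hcp hm2; omega
      have hwp' : p.1 < x.1 ∨ (p.1 = x.1 ∧ x.2 ≤ p.2) := hwp
      refine ⟨p.2, ⟨?_, ?_⟩, ?_⟩
      · refine (ha p.2).mp ⟨hm2, ?_⟩
        show i < x.1 ∨ (i = x.1 ∧ x.2 ≤ p.2)
        omega
      · have h2 := hcp.2
        rw [hp1] at h2
        exact h2
      · rw [← hp1]
    · rintro ⟨j, ⟨haj, hj⟩, rfl⟩
      have hmj : m < j ∧ wle (i, j) x := (ha j).mpr haj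
      have hcell : (i, j) ∈ cellOf (conjP la) (conjP μ) := by
        refine ⟨?_, hj⟩
        show conjP μ i < j
        have := hβm i hi
        omega
      exact ⟨hcell, hmj.2, hcanon (i, j) hcell hmj.1, hmj.1⟩
  rw [hset, Set.ncard_image_of_injective _ (fun a b h => by cases h; rfl), ncard_Icc']

/-- if `T` is semistandard and `T⁺` (the restriction of `T` to columns
`1,…,m`) is shifted Yamanouchi, then `T` is Yamanouchi, i.e. `w(T)` is a lattice word. -/
theorem statement14 (m n : ℕ) (hm : 1 ≤ m) (hn : 1 ≤ n) (la μ ν : ℕ → ℕ)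
    (hla : IsPartition la) (hook : la (m + 1) ≤ n)
    (hμ : IsPartition μ) (hμl : ∀ i, μ i ≤ lamPlus m la i)
    (hν : IsPartition ν) (hνω : ∀ i, lamMinus m la i ≤ ν i)
    (T : ℕ × ℕ → ℕ)
    (hrange : ∀ p ∈ cellOf (conjP la) (conjP μ), m + 1 ≤ T p ∧ T p ≤ m + n)
    (hcanon : ∀ p ∈ cellOf (conjP la) (conjP μ), m < p.2 → T p = m + p.1)
    (hcont : ∀ i, 1 ≤ i → occCount (conjP la) (conjP μ) T (m + i) = ν i)
    (hss : IsSSkew (conjP la) (conjP μ) T)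
    (hsy : ShiftedYam (conjP (lamPlus m la)) (conjP μ) m (lamMinus m la) T) :
    IsLatticeFrom (conjP la) (conjP μ) T (m + 1) := by
  -- basic structural facts
  have hαa : ∀ r r', 1 ≤ r → r ≤ r' → conjP la r' ≤ conjP la r :=
    fun r r' h h' => conj_anti la hla h h'
  have hβm : ∀ r, 1 ≤ r → conjP μ r ≤ m := by
    intro r hr
    by_contra h
    have h1 : (m + 1) ∈ Set.Icc 1 (conjP μ r) := ⟨by omega, by omega⟩
    rw [← conj_set_eq μ hμ r] at h1
    obtain ⟨-, -, hle⟩ := h1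
    have h2 := hμl (m + 1)
    unfold lamPlus at h2
    rw [if_neg (by omega)] at h2
    omega
  have hpos : ∀ p ∈ cellOf (conjP la) (conjP μ), 1 ≤ p.1 ∧ 1 ≤ p.2 := by
    rintro p ⟨h1, h2⟩
    constructor
    · by_contra h
      have h0 : p.1 = 0 := by omega
      rw [h0, conjP_zero] at h2
      omega
    · omega
  have hαp : ∀ r, 1 ≤ r → conjP (lamPlus m la) r = min m (conjP la r) :=
    fun r hr => conj_lamPlus m la hla r hr
  have hω : ∀ r, 1 ≤ r → lamMinus m la r = conjP la r - m :=
    fun r hr => lamMinus_eq m la hla r hr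
  have hpc : ∀ p : ℕ × ℕ, p ∈ cellOf (conjP (lamPlus m la)) (conjP μ)
      ↔ p ∈ cellOf (conjP la) (conjP μ) ∧ p.2 ≤ m := by
    intro p
    constructor
    · rintro ⟨h1, h2⟩
      have hp1 : 1 ≤ p.1 := by
        by_contra h
        have h0 : p.1 = 0 := by omega
        rw [h0, conjP_zero] at h2
        omega
      rw [hαp p.1 hp1] at h2
      exact ⟨⟨h1, by omega⟩, by omega⟩
    · rintro ⟨⟨h1, h2⟩, h3⟩
      have hp1 : 1 ≤ p.1 := (hpos p ⟨h1, h2⟩).1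
      refine ⟨h1, ?_⟩
      show p.2 ≤ conjP (lamPlus m la) p.1
      rw [hαp p.1 hp1]
      omega
  have hfin : (cellOf (conjP la) (conjP μ)).Finite := by
    apply ((Set.finite_Icc 1 (la 1)).prod (Set.finite_Icc 1 (conjP la 1))).subset
    rintro p ⟨h1, h2⟩
    have hp := hpos p ⟨h1, h2⟩
    refine Set.mem_prod.mpr ⟨Set.mem_Icc.mpr ⟨hp.1, ?_⟩,
      Set.mem_Icc.mpr ⟨hp.2, le_trans h2 (hαa 1 p.1 le_rfl hp.1)⟩⟩
    have h3 : (1 : ℕ) ∈ Set.Icc 1 (conjP la p.1) := ⟨le_rfl, by omega⟩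
    rw [← conj_set_eq la hla p.1] at h3
    exact h3.2.2
  have hbound : ∀ p ∈ cellOf (conjP la) (conjP μ), p.2 ≤ m → m < conjP la p.1 →
      T p ≤ m + p.1 := by
    intro p hp hle hml
    have hp1 := (hpos p hp).1
    have hcell2 : (p.1, m + 1) ∈ cellOf (conjP la) (conjP μ) := by
      constructor
      · show conjP μ p.1 < m + 1
        have := hβm p.1 hp1
        omega
      · exact hml
    have h1 : (p.1, p.2) ∈ cellOf (conjP la) (conjP μ) := by rw [Prod.mk.eta]; exact hp
    have h2 := hss.1 p.1 p.2 (m + 1) h1 hcell2 (by omega)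
    have h3 : T (p.1, m + 1) = m + p.1 := hcanon (p.1, m + 1) hcell2 (by omega)
    rw [Prod.mk.eta] at h2
    omega
  have hdec : ∀ (v : ℕ) (y : ℕ × ℕ), occBefore (conjP la) (conjP μ) T v y
      = {p | p ∈ cellOf (conjP la) (conjP μ) ∧ wle p y ∧ T p = v ∧ p.2 ≤ m}.ncard
        + {p | p ∈ cellOf (conjP la) (conjP μ) ∧ wle p y ∧ T p = v ∧ m < p.2}.ncard := by
    intro v y
    have hsplit : {p | p ∈ cellOf (conjP la) (conjP μ) ∧ wle p y ∧ T p = v}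
        = {p | p ∈ cellOf (conjP la) (conjP μ) ∧ wle p y ∧ T p = v ∧ p.2 ≤ m}
          ∪ {p | p ∈ cellOf (conjP la) (conjP μ) ∧ wle p y ∧ T p = v ∧ m < p.2} := by
      ext p
      simp only [Set.mem_setOf_eq, Set.mem_union]
      by_cases h : p.2 ≤ m
      · tauto
      · have h' : m < p.2 := by omega
        tauto
    have hd : Disjoint {p | p ∈ cellOf (conjP la) (conjP μ) ∧ wle p y ∧ T p = v ∧ p.2 ≤ m}
        {p | p ∈ cellOf (conjP la) (conjP μ) ∧ wle p y ∧ T p = v ∧ m < p.2} := by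
      rw [Set.disjoint_left]
      rintro p ⟨-, -, -, h⟩ ⟨-, -, -, h'⟩
      omega
    show Set.ncard {p | p ∈ cellOf (conjP la) (conjP μ) ∧ wle p y ∧ T p = v} = _
    rw [hsplit, Set.ncard_union_eq hd (hfin.subset (fun p hp => hp.1))
      (hfin.subset (fun p hp => hp.1))]
  have hplus_le : ∀ (v : ℕ) (y : ℕ × ℕ),
      {p | p ∈ cellOf (conjP la) (conjP μ) ∧ wle p y ∧ T p = v ∧ p.2 ≤ m}.ncard
        = occBefore (conjP (lamPlus m la)) (conjP μ) T v y := by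
    intro v y
    unfold occBefore
    congr 1
    ext p
    simp only [Set.mem_setOf_eq]
    constructor
    · rintro ⟨hcp, hwp, htp, hle⟩
      exact ⟨(hpc p).mpr ⟨hcp, hle⟩, hwp, htp⟩
    · rintro ⟨hcp, hwp, htp⟩
      have h := (hpc p).mp hcp
      exact ⟨h.1, hwp, htp, h.2⟩
  have hplus_gt : ∀ (v r c : ℕ), m < c →
      {p | p ∈ cellOf (conjP la) (conjP μ) ∧ wle p (r, c) ∧ T p = v ∧ p.2 ≤ m}
        = {p | p ∈ cellOf (conjP (lamPlus m la)) (conjP μ) ∧ p.1 < r ∧ T p = v} := by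
    intro v r c hmc
    ext p
    simp only [Set.mem_setOf_eq]
    constructor
    · rintro ⟨hcp, hwp, htp, hle⟩
      have hwp' : p.1 < r ∨ (p.1 = r ∧ c ≤ p.2) := hwp
      exact ⟨(hpc p).mpr ⟨hcp, hle⟩, by omega, htp⟩
    · rintro ⟨hcp, hlt, htp⟩
      have h := (hpc p).mp hcp
      exact ⟨h.1, Or.inl hlt, htp, h.2⟩
  have hempty : ∀ (v i' r c : ℕ), r < i' → v = m + i' →
      {p | p ∈ cellOf (conjP la) (conjP μ) ∧ wle p (r, c) ∧ T p = v ∧ m < p.2} = ∅ := by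
    intro v i' r c hri hv
    apply Set.eq_empty_iff_forall_notMem.mpr
    rintro p ⟨hcp, hwp, htp, hm2⟩
    have h := hcanon p hcp hm2
    have hwp' : p.1 < r ∨ (p.1 = r ∧ c ≤ p.2) := hwp
    omega
  have hSY' : ∀ (r i : ℕ), 1 ≤ i →
      lamMinus m la (i + 1)
        + {p | p ∈ cellOf (conjP (lamPlus m la)) (conjP μ) ∧ p.1 < r ∧ T p = m + i + 1}.ncard
      ≤ lamMinus m la i
        + {p | p ∈ cellOf (conjP (lamPlus m la)) (conjP μ) ∧ p.1 < r ∧ T p = m + i}.ncard := by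
    intro r
    induction r with
    | zero =>
      intro i hi
      have he : ∀ v : ℕ, {p | p ∈ cellOf (conjP (lamPlus m la)) (conjP μ) ∧ p.1 < 0 ∧ T p = v}
          = (∅ : Set (ℕ × ℕ)) := by
        intro v
        ext p
        simp
      rw [he (m + i + 1), he (m + i), Set.ncard_empty]
      rw [hω (i + 1) (by omega), hω i hi]
      have := hαa i (i + 1) hi (by omega)
      omega
    | succ r ih =>
      intro i hi
      by_cases hrow : conjP μ r < min m (conjP la r)
      · have hr1 : 1 ≤ r := by
          by_contra h
          have h0 : r = 0 := by omega
          rw [h0, conjP_zero, conjP_zero, Nat.min_zero] at hrow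
          omega
        have hy : (r, conjP μ r + 1) ∈ cellOf (conjP (lamPlus m la)) (conjP μ) := by
          constructor
          · show conjP μ r < conjP μ r + 1
            omega
          · show conjP μ r + 1 ≤ conjP (lamPlus m la) r
            rw [hαp r hr1]
            omega
        have hset : ∀ v : ℕ,
            {p | p ∈ cellOf (conjP (lamPlus m la)) (conjP μ) ∧ p.1 < r + 1 ∧ T p = v}
            = {p | p ∈ cellOf (conjP (lamPlus m la)) (conjP μ)
                ∧ wle p (r, conjP μ r + 1) ∧ T p = v} := by
          intro v
          ext p
          simp only [Set.mem_setOf_eq]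
          constructor
          · rintro ⟨hc, hlt, ht⟩
            refine ⟨hc, ?_, ht⟩
            show p.1 < r ∨ (p.1 = r ∧ conjP μ r + 1 ≤ p.2)
            rcases Nat.lt_or_ge p.1 r with h | h
            · exact Or.inl h
            · have hp1 : p.1 = r := by omega
              right
              refine ⟨hp1, ?_⟩
              have hb := hc.1
              rw [hp1] at hb
              omega
          · rintro ⟨hc, hw, ht⟩
            have hw' : p.1 < r ∨ (p.1 = r ∧ conjP μ r + 1 ≤ p.2) := hw
            exact ⟨hc, by omega, ht⟩
        rw [hset (m + i + 1), hset (m + i)]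
        exact hsy (r, conjP μ r + 1) hy i hi
      · have hset : ∀ v : ℕ,
            {p | p ∈ cellOf (conjP (lamPlus m la)) (conjP μ) ∧ p.1 < r + 1 ∧ T p = v}
            = {p | p ∈ cellOf (conjP (lamPlus m la)) (conjP μ) ∧ p.1 < r ∧ T p = v} := by
          intro v
          ext p
          simp only [Set.mem_setOf_eq]
          constructor
          · rintro ⟨hc, hlt, ht⟩
            refine ⟨hc, ?_, ht⟩
            rcases Nat.lt_or_ge p.1 r with h | h
            · exact h
            · exfalso
              have hp1 : p.1 = r := by omega
              have hcell := (hpc p).mp hc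
              have hr1 : 1 ≤ p.1 := (hpos p hcell.1).1
              have h2 := hc.2
              rw [hαp p.1 hr1] at h2
              have hb := hc.1
              rw [hp1] at hb h2
              exact hrow (lt_of_lt_of_le hb h2)
          · rintro ⟨hc, hlt, ht⟩
            exact ⟨hc, by omega, ht⟩
        rw [hset (m + i + 1), hset (m + i)]
        exact ih i hi
  -- main argument
  intro x hx v hv
  obtain ⟨i, hi, rfl⟩ : ∃ i, 1 ≤ i ∧ v = m + i := ⟨v - m, by omega, by omega⟩
  obtain ⟨r, c⟩ := x
  have hr1 : 1 ≤ r := (hpos (r, c) hx).1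
  have hx2 : c ≤ conjP la r := hx.2
  rw [hdec (m + i + 1) (r, c), hdec (m + i) (r, c)]
  by_cases hc : c ≤ m
  · -- Case A : x in the T⁺ part
    rw [hplus_le (m + i + 1) (r, c), hplus_le (m + i) (r, c)]
    have hxp : (r, c) ∈ cellOf (conjP (lamPlus m la)) (conjP μ) := (hpc (r, c)).mpr ⟨hx, hc⟩
    have hs := hsy (r, c) hxp i hi
    rw [hω (i + 1) (by omega), hω i hi] at hs
    rcases Nat.lt_or_ge i r with hir | hir
    · -- A1 : i < r
      have hc1 := canon_card m la μ T hβm hcanon (r, c) i (m + 1) (m + i) hi rfl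
        (fun j => by show (m < j ∧ (i < r ∨ (i = r ∧ c ≤ j))) ↔ m + 1 ≤ j; omega)
      have hc2 := canon_card m la μ T hβm hcanon (r, c) (i + 1) (m + 1) (m + i + 1)
        (by omega) (by omega)
        (fun j => by show (m < j ∧ (i + 1 < r ∨ (i + 1 = r ∧ c ≤ j))) ↔ m + 1 ≤ j; omega)
      rw [hc1, hc2]
      omega
    · rcases Nat.eq_or_lt_of_le hir with he | hlt
      · -- A2 : i = r
        have hc1 := canon_card m la μ T hβm hcanon (r, c) i (m + 1) (m + i) hi rfl
          (fun j => by show (m < j ∧ (i < r ∨ (i = r ∧ c ≤ j))) ↔ m + 1 ≤ j; omega)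
        rw [hc1, hempty (m + i + 1) (i + 1) r c (by omega) (by omega), Set.ncard_empty]
        omega
      · -- A3 : r < i
        rw [hempty (m + i) i r c hlt rfl,
          hempty (m + i + 1) (i + 1) r c (by omega) (by omega), Set.ncard_empty]
        by_cases hml : m < conjP la r
        · have hEe : occBefore (conjP (lamPlus m la)) (conjP μ) T (m + i + 1) (r, c) = 0 := by
            unfold occBefore
            have hEs : {p | p ∈ cellOf (conjP (lamPlus m la)) (conjP μ)
                ∧ wle p (r, c) ∧ T p = m + i + 1} = ∅ := by
              apply Set.eq_empty_iff_forall_notMem.mpr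
              rintro p ⟨hcp, hwp, htp⟩
              have hcell := (hpc p).mp hcp
              have hp1 := (hpos p hcell.1).1
              have hwp' : p.1 < r ∨ (p.1 = r ∧ c ≤ p.2) := hwp
              have hup := hbound p hcell.1 hcell.2
                (lt_of_lt_of_le hml (hαa p.1 r hp1 (by omega)))
              omega
            rw [hEs, Set.ncard_empty]
          rw [hEe]
          omega
        · have h1 : conjP la i ≤ conjP la r := hαa r i hr1 (by omega)
          have h2 : conjP la (i + 1) ≤ conjP la r := hαa r (i + 1) hr1 (by omega)
          omega
  · -- Case B : x in the canonical part
    have hmc : m < c := by omega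
    have hcα : m < conjP la r := lt_of_lt_of_le hmc hx2
    rw [hplus_gt (m + i + 1) r c hmc, hplus_gt (m + i) r c hmc]
    rcases Nat.lt_or_ge i r with hir | hir
    · -- B2 : i + 1 ≤ r
      have hc1 := canon_card m la μ T hβm hcanon (r, c) i (m + 1) (m + i) hi rfl
        (fun j => by show (m < j ∧ (i < r ∨ (i = r ∧ c ≤ j))) ↔ m + 1 ≤ j; omega)
      rw [hc1]
      have hS := hSY' r i hi
      rw [hω (i + 1) (by omega), hω i hi] at hS
      rcases Nat.eq_or_lt_of_le (show i + 1 ≤ r by omega) with he | hlt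
      · have hc2 := canon_card m la μ T hβm hcanon (r, c) (i + 1) c (m + i + 1)
          (by omega) (by omega)
          (fun j => by show (m < j ∧ (i + 1 < r ∨ (i + 1 = r ∧ c ≤ j))) ↔ c ≤ j; omega)
        rw [hc2]
        have h3 : conjP la (i + 1) ≤ conjP la i := hαa i (i + 1) hi (by omega)
        omega
      · have hc2 := canon_card m la μ T hβm hcanon (r, c) (i + 1) (m + 1) (m + i + 1)
          (by omega) (by omega)
          (fun j => by show (m < j ∧ (i + 1 < r ∨ (i + 1 = r ∧ c ≤ j))) ↔ m + 1 ≤ j; omega)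
        rw [hc2]
        omega
    · -- B1 : r ≤ i
      rw [hempty (m + i + 1) (i + 1) r c (by omega) (by omega), Set.ncard_empty]
      have hRe : {p | p ∈ cellOf (conjP (lamPlus m la)) (conjP μ) ∧ p.1 < r ∧ T p = m + i + 1}
          = ∅ := by
        apply Set.eq_empty_iff_forall_notMem.mpr
        rintro p ⟨hcp, hlt, htp⟩
        have hcell := (hpc p).mp hcp
        have hp1 := (hpos p hcell.1).1
        have hup := hbound p hcell.1 hcell.2
          (lt_of_lt_of_le hcα (hαa p.1 r hp1 (by omega)))
        omega
      rw [hRe, Set.ncard_empty]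
      omega
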